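/- Matching count in the odd-type shuriken graph: Let N ≥ 4 be an even integer and let S_N^1 be the shuriken graph with tips v_1,…,v_N, inner vertices u_1,…,u_N and centre c. Then for every subset T of the set of tips {v_1,…,v_N}, the number of matchings of S_N^1 whose set of covered vertices is exactly {u_1,…,u_N, c} ∪ T is equal to N if |T| is odd, and equal to 0 if |T| is even. -/

import Mathlib

/-- The odd-type shuriken graph `S_N^1` on vertices `some (Sum.inl t)` (the tips
`v_{t+1}`), `some (Sum.inr i)` (the inner vertices `u_{i+1}`) and `none` (the centre `c`).
Its edges are the inner cycle edges `{u_i, u_{i+1}}` (indices mod `N`), the blade edges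
`{v_j, u_{j-1}}, {v_j, u_j}` for `2 ≤ j ≤ N` together with `{v_1, u_1}` and `{v_1, u_N}`
(in 0-based terms: tip `t` is adjacent to inner `t` and inner `(t+N-1) % N`), and the
edges `{c, u_i}` joining the centre to every inner vertex. -/
def shuriken1 (N : ℕ) : SimpleGraph (Option (Fin N ⊕ Fin N)) :=
  SimpleGraph.fromRel (fun a b =>
    match a, b with
    | some (Sum.inr i), some (Sum.inr j) => j.1 = (i.1 + 1) % N
    | some (Sum.inl t), some (Sum.inr i) => i = t ∨ i.1 = (t.1 + N - 1) % N
    | none, some (Sum.inr _) => True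
    | _, _ => False)

namespace ShurikenProof

open SimpleGraph

abbrev V (N : ℕ) := Option (Fin N ⊕ Fin N)

variable {N : ℕ}

def inn (i : Fin N) : V N := some (Sum.inr i)
def tip (t : Fin N) : V N := some (Sum.inl t)

lemma inn_ne_tip (i t : Fin N) : inn i ≠ tip t := by simp [inn, tip]
lemma inn_inj {i j : Fin N} (h : inn i = inn j) : i = j := by simpa [inn] using h
lemma tip_inj {i j : Fin N} (h : tip i = tip j) : i = j := by simpa [tip] using h

lemma adj_none_iff (w : V N) : (shuriken1 N).Adj none w ↔ ∃ i, w = inn i := by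
  rcases w with _ | (t | j) <;> simp [shuriken1, inn, tip]

lemma adj_tip_iff (t : Fin N) (w : V N) :
    (shuriken1 N).Adj (tip t) w ↔
      ∃ i : Fin N, w = inn i ∧ (i = t ∨ i.1 = (t.1 + N - 1) % N) := by
  rcases w with _ | (t' | j) <;> simp [shuriken1, inn, tip]

lemma adj_inn_iff (i : Fin N) (w : V N) :
    (shuriken1 N).Adj (inn i) w ↔
      (w = none) ∨ (∃ t, w = tip t ∧ (i = t ∨ i.1 = (t.1 + N - 1) % N)) ∨
        (∃ j, w = inn j ∧ i ≠ j ∧ (j.1 = (i.1 + 1) % N ∨ i.1 = (j.1 + 1) % N)) := by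
  rcases w with _ | (t' | j) <;> simp [shuriken1, inn, tip]

lemma adj_none_inn (i : Fin N) : (shuriken1 N).Adj none (inn i) := by
  simp [shuriken1, inn]

lemma adj_tip_inn_self (t : Fin N) : (shuriken1 N).Adj (tip t) (inn t) := by
  rw [adj_tip_iff]; exact ⟨t, rfl, Or.inl rfl⟩

lemma adj_tip_inn_pred (t i : Fin N) (h : i.1 = (t.1 + N - 1) % N) :
    (shuriken1 N).Adj (tip t) (inn i) := by
  rw [adj_tip_iff]; exact ⟨i, rfl, Or.inr h⟩

lemma adj_inn_inn_succ (i j : Fin N) (hne : i ≠ j) (h : j.1 = (i.1 + 1) % N) :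
    (shuriken1 N).Adj (inn i) (inn j) := by
  rw [adj_inn_iff]; exact Or.inr (Or.inr ⟨j, rfl, hne, Or.inl h⟩)

/-! ### modular arithmetic helpers -/

lemma mod_ne_of_small {n a j : ℕ} (hj : 0 < j) (hjn : j < n) : (a + j) % n ≠ a % n := by
  intro h
  have := (Nat.modEq_iff_dvd' (Nat.le_add_right a j)).mp h.symm
  simp only [Nat.add_sub_cancel_left] at this
  exact absurd (Nat.le_of_dvd hj this) (by omega)


/-! ### coordinates -/

section Main

variable (k : Fin N) (T : Finset (Fin N))

/-- inner vertex at path position `p` (position `N-1` is `u_k`, matched to the centre). -/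
def I (p : ℕ) : Fin N := ⟨(k.1 + 1 + p) % N, Nat.mod_lt _ k.pos⟩

/-- path coordinate of an inner vertex (or of a tip: the tip `t` is adjacent to the
inner vertices at coordinates `coord t` and `coord t - 1`). -/
def coord (i : Fin N) : ℕ := (i.1 + (N - 1 - k.1)) % N

lemma coord_lt (i : Fin N) : coord k i < N := Nat.mod_lt _ k.pos

lemma I_coord (i : Fin N) : I k (coord k i) = i := by
  have hk := k.isLt
  have hi := i.isLt
  apply Fin.ext
  show (k.1 + 1 + (i.1 + (N - 1 - k.1)) % N) % N = i.1
  rw [Nat.add_mod_mod, show k.1 + 1 + (i.1 + (N - 1 - k.1)) = i.1 + N by omega,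
    Nat.add_mod_right, Nat.mod_eq_of_lt hi]

lemma coord_I {p : ℕ} (hp : p < N) : coord k (I k p) = p := by
  have hk := k.isLt
  show ((k.1 + 1 + p) % N + (N - 1 - k.1)) % N = p
  rw [Nat.mod_add_mod, show k.1 + 1 + p + (N - 1 - k.1) = p + N by omega,
    Nat.add_mod_right, Nat.mod_eq_of_lt hp]

lemma I_inj {p q : ℕ} (hp : p < N) (hq : q < N) (h : I k p = I k q) : p = q := by
  have := coord_I k hp; have := coord_I k hq
  rw [h] at *; omega

lemma coord_eq_last : coord k k = N - 1 := by
  have hk := k.isLt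
  show (k.1 + (N - 1 - k.1)) % N = N - 1
  rw [show k.1 + (N - 1 - k.1) = N - 1 by omega, Nat.mod_eq_of_lt (by omega)]

lemma I_last : I k (N - 1) = k := by
  have h := coord_eq_last k
  have := I_coord k k
  rwa [h] at this

lemma I_val_succ {p : ℕ} : (I k (p + 1)).1 = ((I k p).1 + 1) % N := by
  show (k.1 + 1 + (p + 1)) % N = ((k.1 + 1 + p) % N + 1) % N
  rw [Nat.mod_add_mod]; ring_nf

lemma I_ne_succ (hN : 4 ≤ N) {p : ℕ} : I k p ≠ I k (p + 1) := by
  intro h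
  have h' : (k.1 + 1 + p + 1) % N = (k.1 + 1 + p) % N := by
    have := congrArg Fin.val h
    simpa [I, ← Nat.add_assoc] using this.symm
  exact mod_ne_of_small (by omega) (by omega) h'

lemma I_zero_pred (hN : 4 ≤ N) : ((I k 0).1 + N - 1) % N = k.1 := by
  have hk := k.isLt
  show ((k.1 + 1 + 0) % N + N - 1) % N = k.1
  have h1 : (k.1 + 1 + 0) % N + N - 1 = (k.1 + 1 + 0) % N + (N - 1) := by omega
  rw [h1, Nat.mod_add_mod, show k.1 + 1 + 0 + (N - 1) = k.1 + N from by omega,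
    Nat.add_mod_right, Nat.mod_eq_of_lt hk]

lemma I_pred_val (hN : 4 ≤ N) {p : ℕ} (hp : 1 ≤ p) :
    (I k (p - 1)).1 = ((I k p).1 + N - 1) % N := by
  show (k.1 + 1 + (p - 1)) % N = ((k.1 + 1 + p) % N + N - 1) % N
  have h2 : (k.1 + 1 + p) % N + N - 1 = (k.1 + 1 + p) % N + (N - 1) := by omega
  rw [h2, Nat.mod_add_mod, show k.1 + 1 + p + (N - 1) = (k.1 + 1 + (p - 1)) + N by omega,
    Nat.add_mod_right]


lemma coord_inj {a b : Fin N} (h : coord k a = coord k b) : a = b := by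
  have ha := I_coord k a; have hb := I_coord k b
  rw [h] at ha; rw [← ha, hb]

/-! ### cells of monomers -/

/-- number of tips with slot `≤ s`. -/
def rank (s : ℕ) : ℕ := (T.filter (fun t => coord k t ≤ s)).card

/-- the cell (path position) of the inner vertex matched to the tip with slot `s`. -/
def cell (s : ℕ) : ℕ := if s % 2 = (rank k T s - 1) % 2 then s else s - 1

/-- the set of cells matched to a non-inner vertex (tip or centre). -/
def Q : Finset ℕ := insert (N - 1) (T.image (fun t => cell k T (coord k t)))

/-- the number of monomer cells before `p`. -/
def mcount (p : ℕ) : ℕ := ((Q k T).filter (· < p)).card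

lemma cell_le (s : ℕ) : cell k T s ≤ s := by
  unfold cell; split <;> omega

lemma cell_ge (s : ℕ) : s - 1 ≤ cell k T s := by
  unfold cell; split <;> omega

lemma mcount_succ (p : ℕ) :
    mcount k T (p + 1) = mcount k T p + if p ∈ Q k T then 1 else 0 := by
  unfold mcount
  have h1 : (Q k T).filter (· < p+1) = (Q k T).filter (fun x => x < p ∨ x = p) := by
    apply Finset.filter_congr; intro x _; constructor <;> (intro h; omega)
  rw [h1, Finset.filter_or,
    Finset.card_union_of_disjoint (by simp [Finset.disjoint_left]; omega), Finset.filter_eq']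
  split <;> simp

lemma mcount_zero : mcount k T 0 = 0 := by
  unfold mcount
  rw [Finset.filter_false_of_mem (by intro x _; omega), Finset.card_empty]

lemma mem_Q {q : ℕ} : q ∈ Q k T ↔ q = N - 1 ∨ ∃ t ∈ T, cell k T (coord k t) = q := by
  simp [Q]

lemma last_mem_Q : N - 1 ∈ Q k T := Finset.mem_insert_self _ _

lemma rank_eq {t : Fin N} (ht : t ∈ T) :
    rank k T (coord k t) = (T.filter (fun t' => coord k t' < coord k t)).card + 1 := by
  unfold rank
  have h1 : T.filter (fun t' => coord k t' ≤ coord k t)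
      = T.filter (fun t' => coord k t' < coord k t ∨ t' = t) := by
    apply Finset.filter_congr; intro x hx
    constructor
    · intro h
      rcases Nat.lt_or_ge (coord k x) (coord k t) with h' | h'
      · exact Or.inl h'
      · exact Or.inr (coord_inj k (by omega))
    · rintro (h | rfl) <;> omega
  rw [h1, Finset.filter_or,
    Finset.card_union_of_disjoint (by
      rw [Finset.disjoint_left]
      rintro x hx hx'
      rw [Finset.mem_filter] at hx hx'
      rw [hx'.2] at hx
      omega),
    Finset.filter_eq']
  simp [ht]

lemma rank_succ_eq {t : Fin N} (ht : t ∈ T) :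
    (T.filter (fun t' => coord k t' < coord k t + 1)).card = rank k T (coord k t) := by
  unfold rank
  congr 1
  apply Finset.filter_congr; intro x _; constructor <;> (intro h; omega)

lemma cell_spec {t : Fin N} (ht : t ∈ T) :
    cell k T (coord k t) % 2 = (rank k T (coord k t) - 1) % 2 := by
  have hr := rank_eq k T ht
  unfold cell
  split_ifs with h
  · exact h
  · rcases Nat.eq_zero_or_pos (coord k t) with h0 | h0
    · exfalso; apply h; rw [h0] at hr ⊢
      have hc : (T.filter (fun t' => coord k t' < 0)).card = 0 := by
        rw [Finset.filter_false_of_mem (by intro x _; omega), Finset.card_empty]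
      omega
    · omega

lemma cell_strictMono {t t' : Fin N} (ht : t ∈ T) (ht' : t' ∈ T)
    (h : coord k t < coord k t') : cell k T (coord k t) < cell k T (coord k t') := by
  have h1 := cell_le k T (coord k t)
  have h2 := cell_ge k T (coord k t')
  by_contra hc
  have e2 : cell k T (coord k t') = coord k t' - 1 := by omega
  have e3 : coord k t' = coord k t + 1 := by omega
  have e1 : cell k T (coord k t) = coord k t := by omega
  have s1 := cell_spec k T ht
  have s2 := cell_spec k T ht'
  rw [e2, e3] at s2
  rw [e1] at s1
  have hr' := rank_eq k T ht'
  rw [e3] at hr'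
  have hrr := rank_succ_eq k T ht
  have hr := rank_eq k T ht
  omega

lemma cell_injOn {t t' : Fin N} (ht : t ∈ T) (ht' : t' ∈ T)
    (h : cell k T (coord k t) = cell k T (coord k t')) : t = t' := by
  rcases Nat.lt_trichotomy (coord k t) (coord k t') with hlt | heq | hgt
  · exact absurd (cell_strictMono k T ht ht' hlt) (by omega)
  · exact coord_inj k heq
  · exact absurd (cell_strictMono k T ht' ht hgt) (by omega)

lemma cell_lt_last (hN : 4 ≤ N) (hNeven : Even N) (hT : Odd T.card)
    {t : Fin N} (ht : t ∈ T) : cell k T (coord k t) < N - 1 := by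
  have hlt := coord_lt k t
  have h1 := cell_le k T (coord k t)
  rcases Nat.lt_or_ge (coord k t) (N - 1) with h | h
  · omega
  · have hco : coord k t = N - 1 := by omega
    have hrank : rank k T (coord k t) = T.card := by
      unfold rank
      rw [Finset.filter_true_of_mem]
      intro x hx; have := coord_lt k x; omega
    have hodd : T.card % 2 = 1 := Nat.odd_iff.mp hT
    have hNe : N % 2 = 0 := Nat.even_iff.mp hNeven
    unfold cell
    split_ifs with hsp
    · exfalso; rw [hrank] at hsp; rw [hco] at hsp; omega
    · omega

lemma mcount_cell {t : Fin N} (ht : t ∈ T) :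
    mcount k T (cell k T (coord k t)) = rank k T (coord k t) - 1 := by
  unfold mcount
  have himg : (Q k T).filter (· < cell k T (coord k t))
      = (T.filter (fun t' => coord k t' < coord k t)).image
          (fun t' => cell k T (coord k t')) := by
    ext q
    simp only [Finset.mem_filter, Finset.mem_image, Q, Finset.mem_insert]
    constructor
    · rintro ⟨hq | ⟨t', ht', rfl⟩, hlt⟩
      · exfalso
        have := cell_le k T (coord k t); have := coord_lt k t; omega
      · refine ⟨t', ⟨ht', ?_⟩, rfl⟩
        by_contra hge
        push_neg at hge
        rcases Nat.lt_or_ge (coord k t) (coord k t') with h | h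
        · exact absurd (cell_strictMono k T ht ht' h) (by omega)
        · have heq : coord k t' = coord k t := by omega
          rw [heq] at hlt; omega
    · rintro ⟨t', ⟨ht', hlt⟩, rfl⟩
      exact ⟨Or.inr ⟨t', ht', rfl⟩, cell_strictMono k T ht' ht hlt⟩
  have hinj : Set.InjOn (fun t' => cell k T (coord k t'))
      (T.filter (fun t' => coord k t' < coord k t)) := by
    intro a ha b hb hab
    exact cell_injOn k T (Finset.mem_filter.mp ha).1 (Finset.mem_filter.mp hb).1 hab
  rw [himg, Finset.card_image_of_injOn hinj, rank_eq k T ht]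
  omega

lemma alt_Q (hN : 4 ≤ N) (hNeven : Even N) (hT : Odd T.card) {q : ℕ} (hq : q ∈ Q k T) :
    q % 2 = mcount k T q % 2 := by
  rw [mem_Q] at hq
  rcases hq with rfl | ⟨t, ht, rfl⟩
  · have hm : mcount k T (N-1) = T.card := by
      unfold mcount
      have hft : (Q k T).filter (· < N-1) = T.image (fun t => cell k T (coord k t)) := by
        ext q
        simp only [Finset.mem_filter, Q, Finset.mem_insert, Finset.mem_image]
        constructor
        · rintro ⟨rfl | h, hlt⟩
          · exact absurd hlt (lt_irrefl _)
          · exact h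
        · rintro ⟨t, ht, rfl⟩
          exact ⟨Or.inr ⟨t, ht, rfl⟩, cell_lt_last k T hN hNeven hT ht⟩
      rw [hft, Finset.card_image_of_injOn
        (fun a ha b hb hab => cell_injOn k T ha hb hab)]
    rw [hm]
    have := Nat.odd_iff.mp hT; have := Nat.even_iff.mp hNeven; omega
  · rw [mcount_cell k T ht, cell_spec k T ht]

lemma pair_right (hN : 4 ≤ N) (hNeven : Even N) (hT : Odd T.card) {p : ℕ}
    (hp : p < N) (hpQ : p ∉ Q k T) (hpar : p % 2 = mcount k T p % 2) :
    p < N - 1 ∧ p + 1 ∉ Q k T ∧ mcount k T (p + 1) = mcount k T p := by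
  have hlast := last_mem_Q k T
  have hpn : p ≠ N - 1 := fun h => hpQ (h ▸ hlast)
  have hms := mcount_succ k T p
  rw [if_neg hpQ] at hms
  refine ⟨by omega, ?_, by omega⟩
  intro hmem
  have := alt_Q k T hN hNeven hT hmem
  omega

lemma pair_left (hN : 4 ≤ N) (hNeven : Even N) (hT : Odd T.card) {p : ℕ}
    (hp : p < N) (hpQ : p ∉ Q k T) (hpar : p % 2 ≠ mcount k T p % 2) :
    1 ≤ p ∧ p - 1 ∉ Q k T ∧ (p - 1) % 2 = mcount k T (p - 1) % 2 := by
  have hp1 : 1 ≤ p := by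
    by_contra h
    have : p = 0 := by omega
    rw [this, mcount_zero] at hpar
    omega
  have hms := mcount_succ k T (p - 1)
  rw [show p - 1 + 1 = p by omega] at hms
  have hQ1 : p - 1 ∉ Q k T := by
    intro hmem
    rw [if_pos hmem] at hms
    have := alt_Q k T hN hNeven hT hmem
    omega
  rw [if_neg hQ1] at hms
  exact ⟨hp1, hQ1, by omega⟩


lemma cell_zero : cell k T 0 = 0 := by
  unfold cell; split <;> omega

/-! ### the canonical matching -/

/-- the vertex set that must be covered. -/
def Vset : Set (V N) :=
  {(none : V N)} ∪ Set.range (fun i : Fin N => some (Sum.inr i : Fin N ⊕ Fin N)) ∪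
    (fun t : Fin N => some (Sum.inl t : Fin N ⊕ Fin N)) '' (T : Set (Fin N))

lemma none_mem_Vset : (none : V N) ∈ Vset T := by
  left; left; rfl

lemma inn_mem_Vset (i : Fin N) : inn i ∈ Vset T := by
  left; right; exact ⟨i, rfl⟩

lemma tip_mem_Vset {t : Fin N} : tip t ∈ Vset T ↔ t ∈ T := by
  constructor
  · rintro ((h | ⟨i, hi⟩) | ⟨t', ht', h⟩)
    · exact absurd h (by simp [tip])
    · exact absurd hi (by simp [tip, inn])
    · rwa [show t' = t from tip_inj h] at ht'
  · intro ht; right; exact ⟨t, ht, rfl⟩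

lemma mem_Vset_cases {v : V N} (hv : v ∈ Vset T) :
    v = none ∨ (∃ i, v = inn i) ∨ ∃ t ∈ T, v = tip t := by
  rcases hv with ((h | ⟨i, hi⟩) | ⟨t, ht, h⟩)
  · exact Or.inl (by simpa using h)
  · exact Or.inr (Or.inl ⟨i, hi.symm⟩)
  · exact Or.inr (Or.inr ⟨t, ht, h.symm⟩)

/-- the partner function of the canonical matching with centre matched to `u_k`. -/
def f (v : V N) : V N :=
  match v with
  | none => inn k
  | some (Sum.inl t) => if t ∈ T then inn (I k (cell k T (coord k t))) else some (Sum.inl t)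
  | some (Sum.inr i) =>
    if coord k i = N - 1 then none
    else if I k (coord k i) ∈ T ∧ cell k T (coord k i) = coord k i then
      tip (I k (coord k i))
    else if I k (coord k i + 1) ∈ T ∧ cell k T (coord k i + 1) = coord k i then
      tip (I k (coord k i + 1))
    else if coord k i % 2 = mcount k T (coord k i) % 2 then inn (I k (coord k i + 1))
    else inn (I k (coord k i - 1))

lemma f_none : f k T none = inn k := rfl

lemma f_tip {t : Fin N} (ht : t ∈ T) :
    f k T (tip t) = inn (I k (cell k T (coord k t))) := by
  show f k T (some (Sum.inl t)) = _
  simp only [f, if_pos ht]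

lemma f_inn_last : f k T (inn k) = none := by
  show f k T (some (Sum.inr k)) = _
  simp [f, coord_eq_last]

lemma f_inn_cell (hN : 4 ≤ N) (hNeven : Even N) (hT : Odd T.card)
    {t : Fin N} (ht : t ∈ T) :
    f k T (inn (I k (cell k T (coord k t)))) = tip t := by
  have hqlt : cell k T (coord k t) < N - 1 := cell_lt_last k T hN hNeven hT ht
  have hslt := coord_lt k t
  have hcl := cell_le k T (coord k t)
  have hcg := cell_ge k T (coord k t)
  have hq : coord k (I k (cell k T (coord k t))) = cell k T (coord k t) :=
    coord_I k (by omega)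
  show f k T (some (Sum.inr (I k (cell k T (coord k t))))) = tip t
  simp only [f]
  rw [hq, if_neg (by omega)]
  by_cases hcs : cell k T (coord k t) = coord k t
  · rw [hcs, I_coord, if_pos ⟨ht, hcs⟩]
  · have h1 : 1 ≤ coord k t := by
      by_contra h
      have h0 : coord k t = 0 := by omega
      rw [h0, cell_zero] at hcs
      exact hcs rfl
    have hc1 : cell k T (coord k t) = coord k t - 1 := by omega
    rw [hc1]
    have hco' : coord k (I k (coord k t - 1)) = coord k t - 1 := coord_I k (by omega)
    rw [if_neg ?_]
    · rw [show coord k t - 1 + 1 = coord k t from by omega, I_coord, if_pos ⟨ht, hc1⟩]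
    · rintro ⟨h1', h2'⟩
      have heq : t = I k (coord k t - 1) :=
        cell_injOn k T ht h1' (by rw [hco', h2', hc1])
      have := congrArg (coord k) heq
      rw [hco'] at this
      omega

lemma adj_tip_cell (hN : 4 ≤ N) {t : Fin N} (ht : t ∈ T) :
    (shuriken1 N).Adj (tip t) (inn (I k (cell k T (coord k t)))) := by
  by_cases hcs : cell k T (coord k t) = coord k t
  · rw [hcs, I_coord]; exact adj_tip_inn_self t
  · have hcl := cell_le k T (coord k t)
    have hcg := cell_ge k T (coord k t)
    have h1 : 1 ≤ coord k t := by
      by_contra h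
      have h0 : coord k t = 0 := by omega
      rw [h0, cell_zero] at hcs
      exact hcs rfl
    have hc1 : cell k T (coord k t) = coord k t - 1 := by omega
    rw [hc1]
    apply adj_tip_inn_pred
    rw [I_pred_val k hN h1, I_coord]

lemma f_inn_not_mono {p : ℕ} (hp : p < N) (hpQ : p ∉ Q k T) :
    f k T (inn (I k p)) =
      if p % 2 = mcount k T p % 2 then inn (I k (p + 1)) else inn (I k (p - 1)) := by
  have hco := coord_I k hp
  have hne : p ≠ N - 1 := fun h => hpQ (h ▸ last_mem_Q k T)
  show f k T (some (Sum.inr (I k p))) = _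
  simp only [f]
  rw [hco, if_neg hne, if_neg ?_, if_neg ?_]
  · rintro ⟨h1, h2⟩
    exact hpQ ((mem_Q k T).mpr (Or.inr ⟨I k (p + 1), h1, by rw [coord_I k (by omega), h2]⟩))
  · rintro ⟨h1, h2⟩
    exact hpQ ((mem_Q k T).mpr (Or.inr ⟨I k p, h1, by rw [coord_I k hp, h2]⟩))

lemma f_spec (hN : 4 ≤ N) (hNeven : Even N) (hT : Odd T.card) :
    ∀ v ∈ Vset T, f k T v ∈ Vset T ∧ f k T (f k T v) = v ∧
      (shuriken1 N).Adj v (f k T v) := by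
  intro v hv
  rcases mem_Vset_cases T hv with rfl | ⟨i, rfl⟩ | ⟨t, ht, rfl⟩
  · exact ⟨inn_mem_Vset T k, f_inn_last k T, by rw [f_none]; exact adj_none_inn k⟩
  · -- inner vertex
    have hplt := coord_lt k i
    have hIi := I_coord k i
    by_cases hlast : coord k i = N - 1
    · have hik : i = k := by rw [← hIi, hlast, I_last]
      rw [hik, f_inn_last]
      exact ⟨none_mem_Vset T, f_none k T, (adj_none_inn k).symm⟩
    · by_cases hpQ : coord k i ∈ Q k T
      · -- monomer cell, matched to a tip
        rcases (mem_Q k T).mp hpQ with h | ⟨t, ht, hc⟩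
        · exact absurd h hlast
        · have hrepr : inn i = inn (I k (cell k T (coord k t))) := by rw [hc, hIi]
          refine ⟨?_, ?_, ?_⟩
          · rw [hrepr, f_inn_cell k T hN hNeven hT ht]
            exact (tip_mem_Vset T).mpr ht
          · rw [hrepr, f_inn_cell k T hN hNeven hT ht, f_tip k T ht, ← hrepr]
          · rw [hrepr, f_inn_cell k T hN hNeven hT ht]
            exact (adj_tip_cell k T hN ht).symm
      · -- domino cell
        rw [show inn i = inn (I k (coord k i)) from by rw [hIi]] at *
        rw [f_inn_not_mono k T hplt hpQ]
        by_cases hpar : coord k i % 2 = mcount k T (coord k i) % 2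
        · obtain ⟨hlt1, hQ1, hm1⟩ := pair_right k T hN hNeven hT hplt hpQ hpar
          rw [if_pos hpar]
          refine ⟨inn_mem_Vset T _, ?_, ?_⟩
          · rw [f_inn_not_mono k T (by omega) hQ1, if_neg (by omega)]
            simp
          · exact adj_inn_inn_succ _ _ (I_ne_succ k hN) (I_val_succ k)
        · obtain ⟨hp1, hQ1, hpar1⟩ := pair_left k T hN hNeven hT hplt hpQ hpar
          rw [if_neg hpar]
          refine ⟨inn_mem_Vset T _, ?_, ?_⟩
          · rw [f_inn_not_mono k T (by omega) hQ1, if_pos ?_]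
            · rw [show coord k i - 1 + 1 = coord k i from by omega]
            · exact hpar1
          · have heq : coord k i = coord k i - 1 + 1 := by omega
            have hadj := adj_inn_inn_succ (I k (coord k i - 1)) (I k (coord k i - 1 + 1))
              (I_ne_succ k hN) (I_val_succ k)
            rw [← heq] at hadj
            exact hadj.symm
  · -- tip
    rw [f_tip k T ht]
    exact ⟨inn_mem_Vset T _, by rw [f_inn_cell k T hN hNeven hT ht], adj_tip_cell k T hN ht⟩


/-! ### the canonical matching as a subgraph -/

/-- the canonical matching with centre matched to `u_k`, as a subgraph. -/
def buildM (hN : 4 ≤ N) (hNeven : Even N) (hT : Odd T.card) : (shuriken1 N).Subgraph where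
  verts := Vset T
  Adj v w := (v ∈ Vset T ∧ f k T v = w) ∨ (w ∈ Vset T ∧ f k T w = v)
  adj_sub := by
    rintro v w (⟨hv, rfl⟩ | ⟨hw, rfl⟩)
    · exact (f_spec k T hN hNeven hT v hv).2.2
    · exact ((f_spec k T hN hNeven hT w hw).2.2).symm
  edge_vert := by
    rintro v w (⟨hv, rfl⟩ | ⟨hw, rfl⟩)
    · exact hv
    · exact (f_spec k T hN hNeven hT w hw).1
  symm := ⟨fun v w h => h.symm⟩

lemma buildM_isMatching (hN : 4 ≤ N) (hNeven : Even N) (hT : Odd T.card) :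
    (buildM k T hN hNeven hT).IsMatching := by
  intro v hv
  refine ⟨f k T v, Or.inl ⟨hv, rfl⟩, ?_⟩
  rintro y (⟨hv', rfl⟩ | ⟨hy, hfy⟩)
  · rfl
  · rw [← hfy, (f_spec k T hN hNeven hT y hy).2.1]

lemma buildM_adj_none (hN : 4 ≤ N) (hNeven : Even N) (hT : Odd T.card) :
    (buildM k T hN hNeven hT).Adj none (inn k) :=
  Or.inl ⟨none_mem_Vset T, rfl⟩

/-! ### uniqueness -/

variable (M : (shuriken1 N).Subgraph)

open Classical in
/-- the partner function of an arbitrary matching. -/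
noncomputable def pM (v : V N) : V N :=
  if h : ∃ w, M.Adj v w then h.choose else v

lemma pM_adj (hM : M.IsMatching) {v : V N} (hv : v ∈ M.verts) : M.Adj v (pM M v) := by
  obtain ⟨w, hw, -⟩ := hM hv
  rw [pM, dif_pos ⟨w, hw⟩]
  exact (⟨w, hw⟩ : ∃ w, M.Adj v w).choose_spec

lemma pM_eq (hM : M.IsMatching) {v w : V N} (h : M.Adj v w) : pM M v = w := by
  obtain ⟨w', hw', huniq⟩ := hM (M.edge_vert h)
  rw [huniq _ (pM_adj M hM (M.edge_vert h)), huniq _ h]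

lemma adj_eq (hM : M.IsMatching) {v w w' : V N} (h : M.Adj v w) (h' : M.Adj v w') :
    w = w' := by
  rw [← pM_eq M hM h, pM_eq M hM h']

/-- index of an inner vertex, `k` as a default for other vertices. -/
def innIdx : V N → Fin N
  | some (Sum.inr i) => i
  | _ => k

/-- the cell covered by the partner of tip `t` in the matching `M`. -/
noncomputable def cellM (t : Fin N) : ℕ := coord k (innIdx k (pM M (tip t)))

lemma tipPartner (hN : 4 ≤ N) (hM : M.IsMatching) (hV : M.verts = Vset T)
    (hk : M.Adj none (inn k)) {t : Fin N} (ht : t ∈ T) :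
    M.Adj (tip t) (inn (I k (cellM k M t))) ∧ cellM k M t < N - 1 ∧
      coord k t - 1 ≤ cellM k M t ∧ cellM k M t ≤ coord k t := by
  have htv : tip t ∈ M.verts := by rw [hV]; exact (tip_mem_Vset T).mpr ht
  have hptn := pM_adj M hM htv
  obtain ⟨i, hw, hcase⟩ := (adj_tip_iff t _).mp (M.adj_sub hptn)
  rw [hw] at hptn
  have hcell : cellM k M t = coord k i := by rw [cellM, hw]; rfl
  have hik : i ≠ k := by
    rintro rfl
    exact absurd (adj_eq M hM hptn.symm hk.symm) (by simp [tip])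
  have hslt := coord_lt k t
  have hIt := I_coord k t
  rcases hcase with rfl | hpred
  · -- partner is inner i = t
    have hne : coord k i ≠ N - 1 := by
      intro h
      apply hik
      rw [← I_coord k i, h, I_last]
    refine ⟨?_, by omega, by omega, by omega⟩
    rw [hcell, I_coord k i]
    exact hptn
  · -- partner is inner i = t - 1
    rcases Nat.eq_zero_or_pos (coord k t) with h0 | h0
    · exfalso
      apply hik
      apply Fin.ext
      rw [hpred, ← hIt, h0]
      exact I_zero_pred k hN
    · have hieq : i = I k (coord k t - 1) := by
        apply Fin.ext
        rw [I_pred_val k hN h0, hIt, hpred]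
      have hci : coord k i = coord k t - 1 := by
        rw [hieq, coord_I k (by omega)]
      refine ⟨?_, by omega, by omega, by omega⟩
      rw [hcell, I_coord k i]
      exact hptn

lemma cellM_inj (hN : 4 ≤ N) (hM : M.IsMatching) (hV : M.verts = Vset T)
    (hk : M.Adj none (inn k)) {t t' : Fin N} (ht : t ∈ T) (ht' : t' ∈ T)
    (h : cellM k M t = cellM k M t') : t = t' := by
  have h1 := (tipPartner k T M hN hM hV hk ht).1
  have h2 := (tipPartner k T M hN hM hV hk ht').1
  rw [h] at h1
  exact tip_inj (adj_eq M hM h1.symm h2.symm)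

/-- the monomer cells of the matching `M`. -/
noncomputable def QM : Finset ℕ := insert (N - 1) (T.image (cellM k M))

/-- number of monomer cells of `M` before `p`. -/
noncomputable def mcM (p : ℕ) : ℕ := ((QM k T M).filter (· < p)).card

lemma mcM_succ (p : ℕ) :
    mcM k T M (p + 1) = mcM k T M p + if p ∈ QM k T M then 1 else 0 := by
  unfold mcM
  have h1 : (QM k T M).filter (· < p+1) = (QM k T M).filter (fun x => x < p ∨ x = p) := by
    apply Finset.filter_congr; intro x _; constructor <;> (intro h; omega)
  rw [h1, Finset.filter_or,
    Finset.card_union_of_disjoint (by simp [Finset.disjoint_left]; omega), Finset.filter_eq']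
  split <;> simp

lemma mcM_zero : mcM k T M 0 = 0 := by
  unfold mcM
  rw [Finset.filter_false_of_mem (by intro x _; omega), Finset.card_empty]

lemma mem_QM {q : ℕ} : q ∈ QM k T M ↔ q = N - 1 ∨ ∃ t ∈ T, cellM k M t = q := by
  simp [QM]

lemma mem_QM_iff (hN : 4 ≤ N) (hM : M.IsMatching) (hV : M.verts = Vset T)
    (hk : M.Adj none (inn k)) {p : ℕ} (hp : p < N) :
    p ∈ QM k T M ↔ ∀ j : Fin N, ¬ M.Adj (inn (I k p)) (inn j) := by
  constructor
  · intro hq j hadj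
    rcases (mem_QM k T M).mp hq with rfl | ⟨t, ht, hc⟩
    · rw [I_last] at hadj
      exact absurd (adj_eq M hM hadj hk.symm) (by simp [inn])
    · have h1 := (tipPartner k T M hN hM hV hk ht).1
      rw [hc] at h1
      exact absurd (adj_eq M hM hadj h1.symm) (by simp [inn, tip])
  · intro hnoinn
    have hv : inn (I k p) ∈ M.verts := by rw [hV]; exact inn_mem_Vset T _
    have hadj := pM_adj M hM hv
    rcases (adj_inn_iff _ _).mp (M.adj_sub hadj) with hnone | ⟨t, htip, -⟩ | ⟨j, hj, -⟩
    · rw [hnone] at hadj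
      have := adj_eq M hM hadj.symm hk
      have : I k p = k := inn_inj this
      apply (mem_QM k T M).mpr
      left
      rw [← coord_I k hp, this, coord_eq_last]
    · have htT : t ∈ T := by
        have : tip t ∈ M.verts := by
          rw [htip] at hadj
          exact M.edge_vert hadj.symm
        rw [hV] at this
        exact (tip_mem_Vset T).mp this
      apply (mem_QM k T M).mpr
      right
      refine ⟨t, htT, ?_⟩
      rw [htip] at hadj
      have : pM M (tip t) = inn (I k p) := pM_eq M hM hadj.symm
      rw [cellM, this]
      exact coord_I k hp
    · rw [hj] at hadj
      exact absurd hadj (hnoinn j)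


lemma inn_partner_shape (hN : 4 ≤ N) (hM : M.IsMatching) (hk : M.Adj none (inn k))
    {p : ℕ} (hp : p < N) {j : Fin N} (hj : M.Adj (inn (I k p)) (inn j)) :
    (p + 1 < N ∧ j = I k (p + 1)) ∨ (1 ≤ p ∧ j = I k (p - 1)) := by
  have hplast : p ≠ N - 1 := by
    rintro rfl
    rw [I_last] at hj
    exact absurd (adj_eq M hM hj hk.symm) (by simp [inn])
  rcases (adj_inn_iff _ _).mp (M.adj_sub hj) with hnone | ⟨t, htip, -⟩ | ⟨j', hj', hne, hor⟩
  · exact absurd hnone (by simp [inn])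
  · exact absurd htip (by simp [inn, tip])
  · obtain rfl : j = j' := inn_inj hj'
    rcases hor with h1 | h2
    · left
      refine ⟨by omega, ?_⟩
      apply Fin.ext
      rw [I_val_succ k, ← h1]
    · -- (I k p).1 = (j.1 + 1) % N
      have hjval : j.1 = ((I k p).1 + N - 1) % N := by
        rw [h2, show (j.1 + 1) % N + N - 1 = (j.1 + 1) % N + (N - 1) from by omega,
          Nat.mod_add_mod, show j.1 + 1 + (N - 1) = j.1 + N from by omega,
          Nat.add_mod_right, Nat.mod_eq_of_lt j.isLt]
      rcases Nat.eq_zero_or_pos p with rfl | hp0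
      · exfalso
        have hjk : j = k := by
          apply Fin.ext
          rw [hjval, I_zero_pred k hN]
        rw [hjk] at hj
        exact absurd (adj_eq M hM hj.symm hk.symm) (by simp [inn])
      · right
        refine ⟨hp0, ?_⟩
        apply Fin.ext
        rw [I_pred_val k hN hp0, hjval]

open Classical in
/-- indicator: the cell `p-1` is matched to the cell `p`. -/
noncomputable def br (p : ℕ) : ℕ :=
  if 0 < p ∧ M.Adj (inn (I k (p - 1))) (inn (I k p)) then 1 else 0

lemma br_le_one (p : ℕ) : br k M p ≤ 1 := by
  rw [br]; split <;> omega

lemma parity_count (hN : 4 ≤ N) (hM : M.IsMatching) (hV : M.verts = Vset T)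
    (hk : M.Adj none (inn k)) : ∀ p, p ≤ N - 1 →
    p % 2 = (mcM k T M p + br k M p) % 2 := by
  intro p
  induction p with
  | zero =>
    intro _
    rw [mcM_zero, br, if_neg (by rintro ⟨h, -⟩; omega)]
  | succ p ih =>
    intro hp
    have hplt : p < N := by omega
    have ihh := ih (by omega)
    have hms := mcM_succ k T M p
    by_cases hex : ∃ j : Fin N, M.Adj (inn (I k p)) (inn j)
    · obtain ⟨j, hj⟩ := hex
      have hpQM : p ∉ QM k T M := by
        intro hq
        exact ((mem_QM_iff k T M hN hM hV hk hplt).mp hq) j hj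
      rw [if_neg hpQM] at hms
      rcases inn_partner_shape k M hN hM hk hplt hj with ⟨hlt, rfl⟩ | ⟨hge, rfl⟩
      · have hbr1 : br k M (p + 1) = 1 := by
          rw [br, if_pos ⟨by omega, by simpa using hj⟩]
        have hbr0 : br k M p = 0 := by
          rw [br, if_neg]
          rintro ⟨hp0, hadj⟩
          have h1 := adj_eq M hM hj hadj.symm
          have h2 := I_inj k (by omega) (by omega) (inn_inj h1)
          omega
        omega
      · have hbr1 : br k M p = 1 := by
          rw [br, if_pos ⟨hge, hj.symm⟩]
        have hbr0 : br k M (p + 1) = 0 := by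
          rw [br, if_neg]
          rintro ⟨hp0, hadj⟩
          have hadj' : M.Adj (inn (I k p)) (inn (I k (p + 1))) := by simpa using hadj
          have h1 := adj_eq M hM hj hadj'
          have h2 := I_inj k (by omega) (by omega) (inn_inj h1)
          omega
        omega
    · push_neg at hex
      have hpQM : p ∈ QM k T M := (mem_QM_iff k T M hN hM hV hk hplt).mpr hex
      rw [if_pos hpQM] at hms
      have hbrp : br k M p = 0 := by
        rw [br, if_neg]
        rintro ⟨hp0, hadj⟩
        exact hex _ hadj.symm
      have hbrp1 : br k M (p + 1) = 0 := by
        rw [br, if_neg]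
        rintro ⟨hp0, hadj⟩
        exact hex _ (by simpa using hadj)
      omega

lemma alt_QM (hN : 4 ≤ N) (hM : M.IsMatching) (hV : M.verts = Vset T)
    (hk : M.Adj none (inn k)) {q : ℕ} (hq : q ∈ QM k T M) (hqle : q ≤ N - 1) :
    q % 2 = mcM k T M q % 2 := by
  have h := parity_count k T M hN hM hV hk q hqle
  have hbr : br k M q = 0 := by
    rw [br, if_neg]
    rintro ⟨h0, hadj⟩
    exact ((mem_QM_iff k T M hN hM hV hk (by omega)).mp hq) _ hadj.symm
  omega

lemma cellM_mono (hN : 4 ≤ N) (hM : M.IsMatching) (hV : M.verts = Vset T)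
    (hk : M.Adj none (inn k)) {t t' : Fin N} (ht : t ∈ T) (ht' : t' ∈ T)
    (h : coord k t < coord k t') : cellM k M t < cellM k M t' := by
  obtain ⟨-, -, hb1, hb2⟩ := tipPartner k T M hN hM hV hk ht
  obtain ⟨-, -, hb1', hb2'⟩ := tipPartner k T M hN hM hV hk ht'
  by_contra hc
  have heq : cellM k M t = cellM k M t' := by omega
  have := cellM_inj k T M hN hM hV hk ht ht' heq
  rw [this] at h
  omega

lemma mcM_cellM (hN : 4 ≤ N) (hM : M.IsMatching) (hV : M.verts = Vset T)
    (hk : M.Adj none (inn k)) {t : Fin N} (ht : t ∈ T) :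
    mcM k T M (cellM k M t) = rank k T (coord k t) - 1 := by
  unfold mcM
  have himg : (QM k T M).filter (· < cellM k M t)
      = (T.filter (fun t' => coord k t' < coord k t)).image (cellM k M) := by
    ext q
    simp only [Finset.mem_filter, Finset.mem_image, QM, Finset.mem_insert]
    constructor
    · rintro ⟨hq | ⟨t', ht', rfl⟩, hlt⟩
      · exfalso
        have := (tipPartner k T M hN hM hV hk ht).2.1
        omega
      · refine ⟨t', ⟨ht', ?_⟩, rfl⟩
        by_contra hge
        push_neg at hge
        rcases Nat.lt_or_ge (coord k t) (coord k t') with h | h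
        · exact absurd (cellM_mono k T M hN hM hV hk ht ht' h) (by omega)
        · have heq : coord k t' = coord k t := by omega
          have ht'' : t' = t := coord_inj k heq
          rw [ht''] at hlt; omega
    · rintro ⟨t', ⟨ht', hlt⟩, rfl⟩
      exact ⟨Or.inr ⟨t', ht', rfl⟩, cellM_mono k T M hN hM hV hk ht' ht hlt⟩
  have hinj : Set.InjOn (cellM k M) (T.filter (fun t' => coord k t' < coord k t)) := by
    intro a ha b hb hab
    exact cellM_inj k T M hN hM hV hk (Finset.mem_filter.mp ha).1
      (Finset.mem_filter.mp hb).1 hab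
  rw [himg, Finset.card_image_of_injOn hinj, rank_eq k T ht]
  omega

lemma cellM_eq (hN : 4 ≤ N) (hM : M.IsMatching) (hV : M.verts = Vset T)
    (hk : M.Adj none (inn k)) {t : Fin N} (ht : t ∈ T) :
    cellM k M t = cell k T (coord k t) := by
  have hqm : cellM k M t ∈ QM k T M := (mem_QM k T M).mpr (Or.inr ⟨t, ht, rfl⟩)
  have hlt := (tipPartner k T M hN hM hV hk ht).2.1
  have halt := alt_QM k T M hN hM hV hk hqm (by omega)
  rw [mcM_cellM k T M hN hM hV hk ht] at halt
  obtain ⟨-, -, hb1, hb2⟩ := tipPartner k T M hN hM hV hk ht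
  unfold cell
  split_ifs with h
  · omega
  · omega

lemma QM_eq (hN : 4 ≤ N) (hM : M.IsMatching) (hV : M.verts = Vset T)
    (hk : M.Adj none (inn k)) : QM k T M = Q k T := by
  unfold QM Q
  congr 1
  apply Finset.image_congr
  intro t ht
  exact cellM_eq k T M hN hM hV hk (by simpa using ht)

lemma adj_f (hN : 4 ≤ N) (hNeven : Even N) (hT : Odd T.card) (hM : M.IsMatching)
    (hV : M.verts = Vset T) (hk : M.Adj none (inn k)) :
    ∀ v ∈ Vset T, M.Adj v (f k T v) := by
  intro v hv
  rcases mem_Vset_cases T hv with rfl | ⟨i, rfl⟩ | ⟨t, ht, rfl⟩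
  · rw [f_none]; exact hk
  · have hplt := coord_lt k i
    have hIi := I_coord k i
    by_cases hlast : coord k i = N - 1
    · have hik : i = k := by rw [← hIi, hlast, I_last]
      rw [hik, f_inn_last]
      exact hk.symm
    · by_cases hpQ : coord k i ∈ Q k T
      · rcases (mem_Q k T).mp hpQ with h | ⟨t, ht, hc⟩
        · exact absurd h hlast
        · have hrepr : inn i = inn (I k (cell k T (coord k t))) := by rw [hc, hIi]
          rw [hrepr, f_inn_cell k T hN hNeven hT ht]
          have hadj := (tipPartner k T M hN hM hV hk ht).1
          rw [cellM_eq k T M hN hM hV hk ht] at hadj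
          exact hadj.symm
      · have hpQM : coord k i ∉ QM k T M := by
          rw [QM_eq k T M hN hM hV hk]; exact hpQ
        have hex : ∃ j, M.Adj (inn (I k (coord k i))) (inn j) := by
          by_contra hno
          push_neg at hno
          exact hpQM ((mem_QM_iff k T M hN hM hV hk hplt).mpr hno)
        obtain ⟨j, hj⟩ := hex
        have hpc := parity_count k T M hN hM hV hk (coord k i) (by omega)
        have hmcount : mcount k T (coord k i) = mcM k T M (coord k i) := by
          unfold mcount mcM; rw [QM_eq k T M hN hM hV hk]
        rw [show inn i = inn (I k (coord k i)) from by rw [hIi]]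
        rw [f_inn_not_mono k T hplt hpQ]
        have hbrle := br_le_one k M (coord k i)
        by_cases hpar : coord k i % 2 = mcount k T (coord k i) % 2
        · rw [if_pos hpar]
          have hbr : br k M (coord k i) = 0 := by omega
          rcases inn_partner_shape k M hN hM hk hplt hj with ⟨hlt, rfl⟩ | ⟨hge, rfl⟩
          · exact hj
          · exfalso
            have : br k M (coord k i) = 1 := by
              rw [br, if_pos ⟨hge, hj.symm⟩]
            omega
        · rw [if_neg hpar]
          have hbr : br k M (coord k i) = 1 := by omega
          have hcond : 0 < coord k i ∧
              M.Adj (inn (I k (coord k i - 1))) (inn (I k (coord k i))) := by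
            by_contra hc
            rw [br, if_neg hc] at hbr
            omega
          exact hcond.2.symm
  · rw [f_tip k T ht, ← cellM_eq k T M hN hM hV hk ht]
    exact (tipPartner k T M hN hM hV hk ht).1

lemma M_eq_buildM (hN : 4 ≤ N) (hNeven : Even N) (hT : Odd T.card)
    (hM : M.IsMatching) (hV : M.verts = Vset T) (hk : M.Adj none (inn k)) :
    M = buildM k T hN hNeven hT := by
  have key := adj_f k T M hN hNeven hT hM hV hk
  apply SimpleGraph.Subgraph.ext
  · rw [hV]; rfl
  · funext v w
    apply propext
    constructor
    · intro h
      have hv : v ∈ Vset T := by rw [← hV]; exact M.edge_vert h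
      have h2 := key v hv
      have hw : w = f k T v := adj_eq M hM h h2
      exact Or.inl ⟨hv, hw.symm⟩
    · rintro (⟨hv, rfl⟩ | ⟨hw, rfl⟩)
      · exact key v hv
      · exact (key w hw).symm


/-! ### the count -/

/-- the centre's partner index. -/
noncomputable def kOf (h : 0 < N) : Fin N := innIdx ⟨0, h⟩ (pM M none)

lemma kOf_adj (hN : 4 ≤ N) (hM : M.IsMatching) (hV : M.verts = Vset T) :
    M.Adj none (inn (kOf M (by omega))) := by
  have hv : (none : V N) ∈ M.verts := by rw [hV]; exact none_mem_Vset T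
  have hadj := pM_adj M hM hv
  obtain ⟨i, hi⟩ := (adj_none_iff _).mp (M.adj_sub hadj)
  rw [hi] at hadj
  have hp : pM M none = inn i := pM_eq M hM hadj
  rw [kOf, hp]
  exact hadj

lemma kOf_buildM (hN : 4 ≤ N) (hNeven : Even N) (hT : Odd T.card) (kk : Fin N) :
    kOf (buildM kk T hN hNeven hT) (by omega) = kk := by
  have hp : pM (buildM kk T hN hNeven hT) none = inn kk :=
    pM_eq _ (buildM_isMatching kk T hN hNeven hT) (buildM_adj_none kk T hN hNeven hT)
  rw [kOf, hp]
  rfl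

lemma card_odd (hN : 4 ≤ N) (hNeven : Even N) (hT : Odd T.card) :
    Nat.card { M : (shuriken1 N).Subgraph // M.IsMatching ∧ M.verts = Vset T } = N := by
  have e : { M : (shuriken1 N).Subgraph // M.IsMatching ∧ M.verts = Vset T } ≃ Fin N :=
    { toFun := fun x => kOf x.1 (by omega)
      invFun := fun kk =>
        ⟨buildM kk T hN hNeven hT, buildM_isMatching kk T hN hNeven hT, rfl⟩
      left_inv := by
        rintro ⟨M, hM, hV⟩
        apply Subtype.ext
        exact (M_eq_buildM _ T M hN hNeven hT hM hV (kOf_adj T M hN hM hV)).symm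
      right_inv := by
        intro kk
        exact kOf_buildM T hN hNeven hT kk }
  rw [Nat.card_congr e, Nat.card_eq_fintype_card, Fintype.card_fin]

lemma ncard_Vset : (Vset T).ncard = 1 + N + T.card := by
  have hinj_inn : Function.Injective (fun i : Fin N => (some (Sum.inr i) : V N)) := by
    intro a b h; simpa using h
  have hinj_tip : Function.Injective (fun t : Fin N => (some (Sum.inl t) : V N)) := by
    intro a b h; simpa using h
  have h2 : (Set.range fun i : Fin N => (some (Sum.inr i) : V N)).ncard = N := by
    rw [← Set.image_univ, Set.ncard_image_of_injective _ hinj_inn, Set.ncard_univ,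
      Nat.card_eq_fintype_card, Fintype.card_fin]
  have h3 : ((fun t : Fin N => (some (Sum.inl t) : V N)) '' (T : Set (Fin N))).ncard
      = T.card := by
    rw [Set.ncard_image_of_injective _ hinj_tip, Set.ncard_coe_finset]
  rw [Vset, Set.ncard_union_eq ?d1 ?f1 ?f2, Set.ncard_union_eq ?d2 ?f3 ?f4,
    Set.ncard_singleton, h2, h3]
  case d1 =>
    rw [Set.disjoint_left]
    rintro v hv ⟨t, ht, heq⟩
    rcases hv with hv | ⟨i, hi⟩
    · rw [Set.mem_singleton_iff] at hv
      rw [hv] at heq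
      exact absurd heq (by simp)
    · rw [← hi] at heq
      exact absurd heq (by simp)
  case d2 =>
    rw [Set.disjoint_left]
    rintro v hv ⟨i, rfl⟩
    simp_all
  case f1 => exact Set.toFinite _
  case f2 => exact Set.toFinite _
  case f3 => exact Set.toFinite _
  case f4 => exact Set.toFinite _

lemma card_even (hN : 4 ≤ N) (hNeven : Even N) (hT : ¬ Odd T.card) :
    Nat.card { M : (shuriken1 N).Subgraph // M.IsMatching ∧ M.verts = Vset T } = 0 := by
  rw [Nat.card_eq_zero]
  left
  constructor
  rintro ⟨M, hM, hV⟩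
  have hfin : M.verts.Finite := Set.toFinite _
  haveI := hfin.fintype
  have heven := hM.even_card
  rw [← Set.ncard_eq_toFinset_card'] at heven
  rw [hV, ncard_Vset] at heven
  rw [Nat.even_iff] at heven
  have hNe := Nat.even_iff.mp hNeven
  exact hT (Nat.odd_iff.mpr (by omega))

end Main

end ShurikenProof

/-- **Matching count in the odd-type shuriken graph**: for every even `N ≥ 4` and every
subset `T` of the tips, the number of matchings of `S_N^1` whose set of covered vertices
is exactly (all the inner vertices and the centre) `∪ T` equals `N` if `|T|` is odd and
`0` if `|T|` is even.  Matchings are represented as subgraphs `M` with `M.IsMatching`,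
whose vertex set `M.verts` is the set of covered vertices. -/
theorem shuriken1_matching_count (N : ℕ) (hN : 4 ≤ N) (hNeven : Even N)
    (T : Finset (Fin N)) :
    Nat.card { M : (shuriken1 N).Subgraph // M.IsMatching ∧
        M.verts = {(none : Option (Fin N ⊕ Fin N))} ∪
          Set.range (fun i : Fin N => some (Sum.inr i : Fin N ⊕ Fin N)) ∪
          (fun t : Fin N => some (Sum.inl t : Fin N ⊕ Fin N)) '' (T : Set (Fin N)) } =
      if Odd T.card then N else 0 := by
  by_cases hT : Odd T.card
  · rw [if_pos hT]
    exact ShurikenProof.card_odd T hN hNeven hT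
  · rw [if_neg hT]
    exact ShurikenProof.card_even T hN hNeven hT
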